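/- The divergent ∞pede strategy profile d_0, in which agent A pushes at the root, is not rational: ¬Rat_∞(d_0), where d_n = ⟨A, 2, ⟨A↦2^(2n+2), B↦2^(2n)⟩, π_n⟩ and π_n = ⟨B, 1, ⟨A↦2^(2n+1), B↦2^(2n+3)⟩, p_{n+1}⟩. -/

import Mathlib

noncomputable section

/-- The two agents. -/
inductive Ag : Type
  | A
  | B
deriving DecidableEq

/-- The set of choices `{1, 2}`. -/
inductive Choice : Type
  | one
  | two
deriving DecidableEq

/-- The polynomial functor whose final coalgebra is the set of finite or
infinite strategy profiles: a node is either an ending position carrying a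
utility assignment (no children) or an internal position carrying an agent
and a choice (two children, indexed by `Bool`). -/
def SPF (Agent : Type) : PFunctor.{0} :=
  ⟨(Agent → ℝ) ⊕ (Agent × Choice), fun x => Sum.rec (fun _ => Empty) (fun _ => Bool) x⟩

/-- Finite or infinite strategy profiles, as the M-type (final coalgebra). -/
def StratProf (Agent : Type) : Type :=
  (SPF Agent).M

/-- The ending position `⟨u⟩`. -/
def leafP {Agent : Type} (u : Agent → ℝ) : StratProf Agent :=
  PFunctor.M.mk ⟨Sum.inl u, fun e => Empty.elim e⟩

/-- The strategy profile `⟨a, c, s₁, s₂⟩`. -/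
def nodeP {Agent : Type} (a : Agent) (c : Choice) (s₁ s₂ : StratProf Agent) :
    StratProf Agent :=
  PFunctor.M.mk ⟨Sum.inr (a, c), fun b => bif b then s₂ else s₁⟩

/-- The child selected by choice `c`. -/
def cchild {Agent : Type} (c : Choice) (s₁ s₂ : StratProf Agent) : StratProf Agent :=
  match c with
  | .one => s₁
  | .two => s₂

/-- `conv s`: following the choices of `s` reaches an ending position after
finitely many steps (inductive definition). -/
inductive Conv {Agent : Type} : StratProf Agent → Prop
  | leaf (u : Agent → ℝ) : Conv (leafP u)
  | node1 (a : Agent) (s₁ s₂ : StratProf Agent) :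
      Conv s₁ → Conv (nodeP a Choice.one s₁ s₂)
  | node2 (a : Agent) (s₁ s₂ : StratProf Agent) :
      Conv s₂ → Conv (nodeP a Choice.two s₁ s₂)

/-- The graph of the (partial) utility assignment `ŝ`:
`UtilR s u` holds iff following the choices of `s` reaches the ending
position `⟨u⟩`. -/
inductive UtilR {Agent : Type} : StratProf Agent → (Agent → ℝ) → Prop
  | leaf (u : Agent → ℝ) : UtilR (leafP u) u
  | node1 (a : Agent) (s₁ s₂ : StratProf Agent) (u : Agent → ℝ) :
      UtilR s₁ u → UtilR (nodeP a Choice.one s₁ s₂) u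
  | node2 (a : Agent) (s₁ s₂ : StratProf Agent) (u : Agent → ℝ) :
      UtilR s₂ u → UtilR (nodeP a Choice.two s₁ s₂) u

open Classical in
/-- The utility assignment `ŝ` (an arbitrary default on non-convergent
profiles). -/
def util {Agent : Type} (s : StratProf Agent) : Agent → ℝ :=
  if h : ∃ u, UtilR s u then h.choose else fun _ => 0

/-- `□P`, the coinductive `always` modality: `P` holds at every position of
the strategy profile (greatest fixed point). -/
def Always {Agent : Type} (P : StratProf Agent → Prop) (s : StratProf Agent) : Prop :=
  ∃ R : StratProf Agent → Prop, R s ∧ ∀ t, R t →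
    P t ∧ ∀ a c s₁ s₂, t = nodeP a c s₁ s₂ → R s₁ ∧ R s₂

/-- `PE s`: `s` is always-convergent and the choice at the root of `s` is at
least as good, for the agent who owns the root, as the other choice. -/
def PE {Agent : Type} (s : StratProf Agent) : Prop :=
  Always Conv s ∧
    (∀ a s₁ s₂, s = nodeP a Choice.one s₁ s₂ → util s₁ a ≥ util s₂ a) ∧
    (∀ a s₁ s₂, s = nodeP a Choice.two s₁ s₂ → util s₂ a ≥ util s₁ a)

/-- Subgame perfect equilibrium: `□PE`. -/
def SPE {Agent : Type} : StratProf Agent → Prop :=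
  Always PE

/-- `s =_g s'`: the two strategy profiles have the same underlying game
(coinductive definition). -/
def SameGame {Agent : Type} (s s' : StratProf Agent) : Prop :=
  ∃ R : StratProf Agent → StratProf Agent → Prop, R s s' ∧ ∀ t t', R t t' →
    (∃ u, t = leafP u ∧ t' = leafP u) ∨
    (∃ a c c' s₁ s₂ s₁' s₂',
      t = nodeP a c s₁ s₂ ∧ t' = nodeP a c' s₁' s₂' ∧ R s₁ s₁' ∧ R s₂ s₂')

/-- `Rat_∞`: rationality for finite or infinite strategy profiles
(coinductive definition). -/
def RatInf {Agent : Type} (s : StratProf Agent) : Prop :=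
  ∃ R : StratProf Agent → Prop, R s ∧ ∀ t, R t →
    (∃ u, t = leafP u) ∨
    (∃ a c s₁ s₂ s₁' s₂', t = nodeP a c s₁ s₂ ∧
      SameGame (nodeP a c s₁' s₂') (nodeP a c s₁ s₂) ∧
      SPE (nodeP a c s₁' s₂') ∧ R (cchild c s₁ s₂))

/-- `diverg`: following the choices never reaches an ending position
(coinductive definition). -/
def Diverg {Agent : Type} (s : StratProf Agent) : Prop :=
  ∃ R : StratProf Agent → Prop, R s ∧ ∀ t, R t →
    ∃ a c s₁ s₂, t = nodeP a c s₁ s₂ ∧ R (cchild c s₁ s₂)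

/-- Utilities of the leaf reached when Alice takes at her `n`-th position of
the ∞pede: `A ↦ 2^(2n+2)`, `B ↦ 2^(2n)`. -/
def uAp (n : ℕ) : Ag → ℝ := fun x =>
  match x with
  | Ag.A => (2 : ℝ) ^ (2 * n + 2)
  | Ag.B => (2 : ℝ) ^ (2 * n)

/-- Utilities of the leaf reached when Bob takes at his `n`-th position of
the ∞pede: `A ↦ 2^(2n+1)`, `B ↦ 2^(2n+3)`. -/
def uBp (n : ℕ) : Ag → ℝ := fun x =>
  match x with
  | Ag.A => (2 : ℝ) ^ (2 * n + 1)
  | Ag.B => (2 : ℝ) ^ (2 * n + 3)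

/-- States for the mutual corecursion defining the `always take` profiles
`p_n` and `π_n` of the ∞pede. -/
inductive PedSt : Type
  | pS (n : ℕ)
  | piS (n : ℕ)
  | lS (u : Ag → ℝ)

/-- One step of the corecursion: `p_n = ⟨A, 1, ⟨A↦2^(2n+2), B↦2^(2n)⟩, π_n⟩`
and `π_n = ⟨B, 1, ⟨A↦2^(2n+1), B↦2^(2n+3)⟩, p_{n+1}⟩`. -/
def pedStep : PedSt → (SPF Ag).Obj PedSt
  | PedSt.lS u => ⟨Sum.inl u, fun e => Empty.elim e⟩
  | PedSt.pS n =>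
      ⟨Sum.inr (Ag.A, Choice.one), fun b => bif b then PedSt.piS n else PedSt.lS (uAp n)⟩
  | PedSt.piS n =>
      ⟨Sum.inr (Ag.B, Choice.one), fun b => bif b then PedSt.pS (n + 1) else PedSt.lS (uBp n)⟩

/-- The ∞pede profile `p_n` where both agents always take. -/
def pped (n : ℕ) : StratProf Ag :=
  PFunctor.M.corec pedStep (PedSt.pS n)

/-- The ∞pede profile `π_n` where both agents always take. -/
def piped (n : ℕ) : StratProf Ag :=
  PFunctor.M.corec pedStep (PedSt.piS n)

/-- The divergent ∞pede profile `d_n = ⟨A, 2, ⟨A↦2^(2n+2), B↦2^(2n)⟩, π_n⟩`,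
in which Alice pushes at the root. -/
def dped (n : ℕ) : StratProf Ag :=
  nodeP Ag.A Choice.two (leafP (uAp n)) (piped n)

section Aux
variable {Agent : Type}

theorem nodeP_inj {a a' : Agent} {c c' s₁ s₂ s₁' s₂'}
    (h : nodeP a c s₁ s₂ = nodeP a' c' s₁' s₂') :
    a = a' ∧ c = c' ∧ s₁ = s₁' ∧ s₂ = s₂' := by
  have h2 := PFunctor.M.mk_inj h
  have h3 := congrArg Sigma.fst h2
  simp only at h3
  obtain ⟨rfl, rfl⟩ : a = a' ∧ c = c' := by
    cases h3; exact ⟨rfl, rfl⟩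
  have h2' : (⟨Sum.inr (a, c), fun b => bif b then s₂ else s₁⟩ :
      Σ x : (Agent → ℝ) ⊕ (Agent × Choice), (SPF Agent).B x → StratProf Agent) =
      ⟨Sum.inr (a, c), fun b => bif b then s₂' else s₁'⟩ := h2
  have h4 : (fun b => bif b then s₂ else s₁) = (fun b => bif b then s₂' else s₁') := by
    injection h2'
  exact ⟨rfl, rfl, congrFun h4 false, congrFun h4 true⟩

theorem leafP_inj {u u' : Agent → ℝ} (h : leafP u = leafP u') : u = u' := by
  have h2 := PFunctor.M.mk_inj h
  have h3 := congrArg Sigma.fst h2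
  simp only at h3
  exact Sum.inl.inj h3

theorem leafP_ne_nodeP {u : Agent → ℝ} {a c s₁ s₂} : leafP u ≠ nodeP a c s₁ s₂ := by
  intro h
  have h2 := PFunctor.M.mk_inj h
  have h3 := congrArg Sigma.fst h2
  simp only at h3
  exact absurd h3 (by simp)

end Aux

theorem corec_lS (u : Ag → ℝ) : PFunctor.M.corec pedStep (PedSt.lS u) = leafP u := by
  rw [← PFunctor.M.mk_dest (PFunctor.M.corec pedStep (PedSt.lS u))]
  rw [PFunctor.M.dest_corec]
  unfold leafP
  congr 1
  simp only [pedStep, PFunctor.map_eq]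
  erw [PFunctor.map_eq]
  congr 1
  funext e; exact Empty.elim e

theorem pped_eq (n : ℕ) : pped n = nodeP Ag.A Choice.one (leafP (uAp n)) (piped n) := by
  rw [← PFunctor.M.mk_dest (pped n)]
  unfold pped
  rw [PFunctor.M.dest_corec]
  unfold nodeP
  congr 1
  simp only [pedStep, PFunctor.map_eq]
  erw [PFunctor.map_eq]
  congr 1
  funext b
  cases b
  · exact corec_lS (uAp n)
  · rfl

theorem piped_eq (n : ℕ) : piped n = nodeP Ag.B Choice.one (leafP (uBp n)) (pped (n + 1)) := by
  rw [← PFunctor.M.mk_dest (piped n)]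
  unfold piped
  rw [PFunctor.M.dest_corec]
  unfold nodeP
  congr 1
  simp only [pedStep, PFunctor.map_eq]
  erw [PFunctor.map_eq]
  congr 1
  funext b
  cases b
  · exact corec_lS (uBp n)
  · rfl

/-- One-step destructor for `SameGame` against a node. -/
theorem sameGame_node {Agent : Type} {t : StratProf Agent} {a c s₁ s₂}
    (h : SameGame t (nodeP a c s₁ s₂)) :
    ∃ c' t₁ t₂, t = nodeP a c' t₁ t₂ ∧ SameGame t₁ s₁ ∧ SameGame t₂ s₂ := by
  obtain ⟨R, hR, hstep⟩ := h
  rcases hstep _ _ hR with ⟨u, _, h2⟩ | ⟨a', c', c'', t₁, t₂, t₁', t₂', ht, ht', h1, h2⟩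
  · exact absurd h2.symm leafP_ne_nodeP
  · obtain ⟨rfl, rfl, rfl, rfl⟩ := nodeP_inj ht'
    exact ⟨c', t₁, t₂, ht, ⟨R, h1, hstep⟩, ⟨R, h2, hstep⟩⟩

theorem sameGame_leaf {Agent : Type} {t : StratProf Agent} {u}
    (h : SameGame t (leafP u)) : t = leafP u := by
  obtain ⟨R, hR, hstep⟩ := h
  rcases hstep _ _ hR with ⟨u', h1, h2⟩ | ⟨a', c', c'', t₁, t₂, t₁', t₂', ht, ht', -, -⟩
  · rw [h1, leafP_inj h2.symm]
  · exact absurd ht' leafP_ne_nodeP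

theorem always_node {Agent : Type} {P : StratProf Agent → Prop} {a c s₁ s₂}
    (h : Always P (nodeP a c s₁ s₂)) :
    P (nodeP a c s₁ s₂) ∧ Always P s₁ ∧ Always P s₂ := by
  obtain ⟨R, hR, hstep⟩ := h
  obtain ⟨hP, hch⟩ := hstep _ hR
  obtain ⟨h1, h2⟩ := hch a c s₁ s₂ rfl
  exact ⟨hP, ⟨R, h1, hstep⟩, ⟨R, h2, hstep⟩⟩

theorem conv_node_two {Agent : Type} {a : Agent} {s₁ s₂}
    (h : Conv (nodeP a Choice.two s₁ s₂)) : Conv s₂ := by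
  generalize ht : nodeP a Choice.two s₁ s₂ = t at h
  induction h with
  | leaf u => exact absurd ht.symm leafP_ne_nodeP
  | node1 a' t₁ t₂ h ih =>
    obtain ⟨-, hc, -, -⟩ := nodeP_inj ht; cases hc
  | node2 a' t₁ t₂ h ih =>
    obtain ⟨-, -, -, h2⟩ := nodeP_inj ht; exact h2 ▸ h

theorem utilR_unique {Agent : Type} {s : StratProf Agent} {u u'}
    (h : UtilR s u) (h' : UtilR s u') : u = u' := by
  induction h generalizing u' with
  | leaf v =>
    generalize hq : leafP v = q at h'
    cases h' with
    | leaf u2 => exact leafP_inj hq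
    | node1 a s₁ s₂ v' h2 => exact absurd hq leafP_ne_nodeP
    | node2 a s₁ s₂ v' h2 => exact absurd hq leafP_ne_nodeP
  | node1 a s₁ s₂ v h ih =>
    generalize hq : nodeP a Choice.one s₁ s₂ = q at h'
    cases h' with
    | leaf => exact absurd hq.symm leafP_ne_nodeP
    | node1 a' t₁ t₂ v' h2 =>
      obtain ⟨-, -, h1, -⟩ := nodeP_inj hq; exact ih (h1 ▸ h2)
    | node2 a' t₁ t₂ v' h2 =>
      obtain ⟨-, hc, -, -⟩ := nodeP_inj hq; cases hc
  | node2 a s₁ s₂ v h ih =>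
    generalize hq : nodeP a Choice.two s₁ s₂ = q at h'
    cases h' with
    | leaf => exact absurd hq.symm leafP_ne_nodeP
    | node1 a' t₁ t₂ v' h2 =>
      obtain ⟨-, hc, -, -⟩ := nodeP_inj hq; cases hc
    | node2 a' t₁ t₂ v' h2 =>
      obtain ⟨-, -, -, h2'⟩ := nodeP_inj hq; exact ih (h2' ▸ h2)

theorem util_eq {Agent : Type} {s : StratProf Agent} {u} (h : UtilR s u) : util s = u := by
  unfold util
  rw [dif_pos ⟨u, h⟩]
  exact utilR_unique (Exists.choose_spec (⟨u, h⟩ : ∃ u, UtilR s u)) h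

theorem main_ped {t : StratProf Ag} (hc : Conv t) :
    ∀ n, (Always PE t → SameGame t (piped n) → UtilR t (uBp n)) ∧
         (Always PE t → SameGame t (pped n) → UtilR t (uAp n)) := by
  induction hc with
  | leaf u =>
    intro n
    refine ⟨fun _ hg => ?_, fun _ hg => ?_⟩
    · rw [piped_eq] at hg
      obtain ⟨c', t₁, t₂, ht, -, -⟩ := sameGame_node hg
      exact absurd ht leafP_ne_nodeP
    · rw [pped_eq] at hg
      obtain ⟨c', t₁, t₂, ht, -, -⟩ := sameGame_node hg
      exact absurd ht leafP_ne_nodeP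
  | node1 a s₁ s₂ h ih =>
    intro n
    refine ⟨fun _ hg => ?_, fun _ hg => ?_⟩
    · rw [piped_eq] at hg
      obtain ⟨c', t₁, t₂, ht, hg1, hg2⟩ := sameGame_node hg
      obtain ⟨rfl, rfl, rfl, rfl⟩ := nodeP_inj ht
      exact UtilR.node1 _ _ _ _ (by rw [sameGame_leaf hg1]; exact UtilR.leaf _)
    · rw [pped_eq] at hg
      obtain ⟨c', t₁, t₂, ht, hg1, hg2⟩ := sameGame_node hg
      obtain ⟨rfl, rfl, rfl, rfl⟩ := nodeP_inj ht
      exact UtilR.node1 _ _ _ _ (by rw [sameGame_leaf hg1]; exact UtilR.leaf _)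
  | node2 a s₁ s₂ h ih =>
    intro n
    refine ⟨fun hA hg => ?_, fun hA hg => ?_⟩
    · rw [piped_eq] at hg
      obtain ⟨c', t₁, t₂, ht, hg1, hg2⟩ := sameGame_node hg
      obtain ⟨rfl, rfl, rfl, rfl⟩ := nodeP_inj ht
      obtain ⟨hPE, hA1, hA2⟩ := always_node hA
      have hu2 : UtilR s₂ (uAp (n + 1)) := (ih (n + 1)).2 hA2 hg2
      have hu1 : UtilR s₁ (uBp n) := by rw [sameGame_leaf hg1]; exact UtilR.leaf _
      have hge := hPE.2.2 Ag.B s₁ s₂ rfl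
      rw [util_eq hu2, util_eq hu1] at hge
      exfalso
      simp only [uAp, uBp] at hge
      have hlt : (2 : ℝ) ^ (2 * (n + 1)) < 2 ^ (2 * n + 3) :=
        pow_lt_pow_right₀ one_lt_two (by omega)
      exact absurd hge (not_le.mpr hlt)
    · rw [pped_eq] at hg
      obtain ⟨c', t₁, t₂, ht, hg1, hg2⟩ := sameGame_node hg
      obtain ⟨rfl, rfl, rfl, rfl⟩ := nodeP_inj ht
      obtain ⟨hPE, hA1, hA2⟩ := always_node hA
      have hu2 : UtilR s₂ (uBp n) := (ih n).1 hA2 hg2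
      have hu1 : UtilR s₁ (uAp n) := by rw [sameGame_leaf hg1]; exact UtilR.leaf _
      have hge := hPE.2.2 Ag.A s₁ s₂ rfl
      rw [util_eq hu2, util_eq hu1] at hge
      exfalso
      simp only [uAp, uBp] at hge
      have hlt : (2 : ℝ) ^ (2 * n + 1) < 2 ^ (2 * n + 2) :=
        pow_lt_pow_right₀ one_lt_two (by omega)
      exact absurd hge (not_le.mpr hlt)

/-- The divergent ∞pede strategy profile `d_0` is not rational:
`¬ Rat_∞(d_0)`. -/
theorem not_ratInf_dped_zero : ¬ RatInf (dped 0) := by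
  rintro ⟨R, hR, hstep⟩
  rcases hstep _ hR with ⟨u, hu⟩ | ⟨a, c, s₁, s₂, s₁', s₂', ht, hg, hspe, -⟩
  · unfold dped at hu
    exact leafP_ne_nodeP hu.symm
  · unfold dped at ht
    obtain ⟨rfl, rfl, rfl, rfl⟩ := nodeP_inj ht.symm
    obtain ⟨c', t₁, t₂, ht', hg1, hg2⟩ := sameGame_node hg
    obtain ⟨-, rfl, rfl, rfl⟩ := nodeP_inj ht'
    obtain ⟨hPE, hA1, hA2⟩ := always_node hspe
    have hconv : Conv (nodeP Ag.A Choice.two s₁' s₂') := (always_node hPE.1).1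
    have hcs₂ := conv_node_two hconv
    have hu2 : UtilR s₂' (uBp 0) := (main_ped hcs₂ 0).1 hA2 hg2
    have hu1 : UtilR s₁' (uAp 0) := by rw [sameGame_leaf hg1]; exact UtilR.leaf _
    have hge := hPE.2.2 Ag.A s₁' s₂' rfl
    rw [util_eq hu2, util_eq hu1] at hge
    simp only [uAp, uBp] at hge
    norm_num at hge
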